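/- Let G be a connected graph on n vertices and let H be a bipartite spanning subgraph of G with the maximum number of edges among all bipartite spanning subgraphs. If e = u1 u2 is a cut-edge of H and I1, I2 are the two components of H − e, then the number of edges of G with one end in I1 and the other in I2 is at most 2. -/

import Mathlib

open SimpleGraph

/-- An edge-coloring `c` with `k` colors is a *proper connection coloring* of `G`
if every pair of vertices is joined by a path whose consecutive edges have distinct colors. -/
def ProperConnColoring {V : Type*} (G : SimpleGraph V) {k : ℕ} (c : Sym2 V → Fin k) : Prop :=
  ∀ u v : V, ∃ p : G.Walk u v, p.IsPath ∧ (p.edges.map c).Chain' (· ≠ ·)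

/-- The proper connection number of `G`. -/
noncomputable def pc {V : Type*} (G : SimpleGraph V) : ℕ :=
  sInf {k | ∃ c : Sym2 V → Fin k, ProperConnColoring G c}

private lemma fromEdgeSet_le_of_subset {V : Type*} {G : SimpleGraph V} {s : Set (Sym2 V)}
    (h : s ⊆ G.edgeSet) : SimpleGraph.fromEdgeSet s ≤ G := by
  have := SimpleGraph.fromEdgeSet_mono h
  rwa [SimpleGraph.fromEdgeSet_edgeSet] at this

/-- If `H` is a bipartite spanning subgraph of a connected graph `G` with the maximum
number of edges and `e = u₁u₂` is a cut-edge of `H` with components `I₁, I₂` of `H − e`,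
then at most 2 edges of `G` join `I₁` to `I₂`. -/
theorem maxBipartiteSubgraph_crossing_le_two {V : Type*} (G H : SimpleGraph V)
    (hG : G.Connected) (hHG : H ≤ G) (hbip : H.Colorable 2)
    (hmax : ∀ H' : SimpleGraph V, H' ≤ G → H'.Colorable 2 →
      H'.edgeSet.ncard ≤ H.edgeSet.ncard)
    (u₁ u₂ : V) (he : H.IsBridge s(u₁, u₂)) :
    ({f ∈ G.edgeSet | ∃ x y : V, f = s(x, y) ∧
        (H.deleteEdges {s(u₁, u₂)}).Reachable u₁ x ∧
        (H.deleteEdges {s(u₁, u₂)}).Reachable u₂ y} : Set (Sym2 V)).ncard ≤ 2 := by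
  classical
  set e : Sym2 V := s(u₁, u₂) with he_def
  set H' : SimpleGraph V := H.deleteEdges {e} with hH'_def
  set S : Set (Sym2 V) := {f ∈ G.edgeSet | ∃ x y : V, f = s(x, y) ∧
      H'.Reachable u₁ x ∧ H'.Reachable u₂ y} with hS_def
  by_contra hlt
  push_neg at hlt
  -- basic facts from the bridge hypothesis
  have hnr : ¬ H'.Reachable u₁ u₂ := he
  have hnr' : ¬ H'.Reachable u₁ u₂ := hnr
  obtain ⟨C⟩ := hbip
  have hflip : ∀ z : Fin 2, z ≠ z + 1 := by decide
  have hinj : ∀ z w : Fin 2, z + 1 = w + 1 → z = w := by decide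
  -- S is finite
  have hSfin : S.Finite := by
    by_contra h
    have : S.ncard = 0 := Set.Infinite.ncard h
    omega
  -- a crossing edge cannot be an edge of H' (its ends are in different components)
  have hnotH' : ∀ x y : V, H'.Reachable u₁ x → H'.Reachable u₂ y →
      s(x, y) ∉ H'.edgeSet := by
    intro x y h1 h2 hmem
    exact hnr' (h1.trans ((SimpleGraph.Reachable.symm (SimpleGraph.Adj.reachable hmem)).symm.trans h2.symm))
  -- H.edgeSet is finite
  have hHfin : H.edgeSet.Finite := by
    by_contra h
    have h0 : H.edgeSet.ncard = 0 := Set.Infinite.ncard h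
    obtain ⟨f₀, hf₀⟩ := Set.nonempty_of_ncard_ne_zero (s := S) (by omega)
    obtain ⟨hf₀G, x₀, y₀, hf₀eq, -, -⟩ := hf₀
    have hxy : x₀ ≠ y₀ := by
      intro hxy
      exact G.not_isDiag_of_mem_edgeSet hf₀G (by rw [hf₀eq, hxy]; exact Sym2.mk_isDiag_iff.2 rfl)
    have hle : SimpleGraph.fromEdgeSet {f₀} ≤ G :=
      fromEdgeSet_le_of_subset (by simp [hf₀G])
    have hcol : (SimpleGraph.fromEdgeSet {f₀}).Colorable 2 := by
      refine ⟨SimpleGraph.Coloring.mk (fun v => if v = y₀ then 1 else 0) ?_⟩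
      intro a b hab
      rw [SimpleGraph.fromEdgeSet_adj] at hab
      obtain ⟨hab1, hab2⟩ := hab
      rw [Set.mem_singleton_iff, hf₀eq, Sym2.eq_iff] at hab1
      rcases hab1 with ⟨rfl, rfl⟩ | ⟨rfl, rfl⟩ <;> simp [hxy, Ne.symm hxy] <;> decide
    have := hmax _ hle hcol
    rw [SimpleGraph.edgeSet_fromEdgeSet] at this
    have hdiag : ({f₀} : Set (Sym2 V)) \ {e | e.IsDiag} = {f₀} := by
      ext z
      simp only [Set.mem_diff, Set.mem_singleton_iff, Set.mem_setOf_eq, and_iff_left_iff_imp]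
      rintro rfl
      exact G.not_isDiag_of_mem_edgeSet hf₀G
    rw [show Sym2.diagSet = {e : Sym2 V | e.IsDiag} from rfl, hdiag, Set.ncard_singleton, h0] at this
    omega
  have hH'fin : H'.edgeSet.Finite := by
    rw [hH'_def, SimpleGraph.edgeSet_deleteEdges]
    exact hHfin.diff
  -- key: any crossing edge ≠ e has equally-colored endpoints (witnesses)
  have key : ∀ f ∈ S, f ≠ e → ∃ x y : V, f = s(x, y) ∧
      H'.Reachable u₁ x ∧ H'.Reachable u₂ y ∧ C x = C y ∧ f ∉ H.edgeSet := by
    intro f hfS hfe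
    obtain ⟨hfG, x, y, hfeq, h1, h2⟩ := hfS
    have hfH' : f ∉ H'.edgeSet := by rw [hfeq]; exact hnotH' x y h1 h2
    have hfH : f ∉ H.edgeSet := by
      intro hmem
      exact hfH' (by rw [hH'_def, SimpleGraph.edgeSet_deleteEdges]; exact ⟨hmem, hfe⟩)
    refine ⟨x, y, hfeq, h1, h2, ?_, hfH⟩
    by_contra hne
    -- then H ⊔ {f} is a bigger bipartite subgraph
    set H₂ : SimpleGraph V := H ⊔ SimpleGraph.fromEdgeSet {f} with hH₂
    have hle : H₂ ≤ G := sup_le hHG (fromEdgeSet_le_of_subset (by simp [hfG]))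
    have hcol : H₂.Colorable 2 := by
      refine ⟨SimpleGraph.Coloring.mk C ?_⟩
      intro a b hab
      rcases hab with hab | hab
      · exact C.valid hab
      · rw [SimpleGraph.fromEdgeSet_adj] at hab
        obtain ⟨hab1, -⟩ := hab
        rw [Set.mem_singleton_iff, hfeq, Sym2.eq_iff] at hab1
        rcases hab1 with ⟨rfl, rfl⟩ | ⟨rfl, rfl⟩
        · exact hne
        · exact Ne.symm hne
    have hE : H₂.edgeSet = insert f H.edgeSet := by
      rw [hH₂, SimpleGraph.edgeSet_sup, SimpleGraph.edgeSet_fromEdgeSet]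
      have hdiag : ({f} : Set (Sym2 V)) \ {e | e.IsDiag} = {f} := by
        ext z
        simp only [Set.mem_diff, Set.mem_singleton_iff, Set.mem_setOf_eq, and_iff_left_iff_imp]
        rintro rfl
        exact G.not_isDiag_of_mem_edgeSet hfG
      rw [show Sym2.diagSet = {e : Sym2 V | e.IsDiag} from rfl, hdiag, Set.union_singleton]
    have := hmax H₂ hle hcol
    rw [hE, Set.ncard_insert_of_notMem hfH hHfin] at this
    omega
  -- extract two distinct crossing edges different from e
  have hdS : 1 < (S \ {e}).ncard := by
    have := Set.pred_ncard_le_ncard_diff_singleton S e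
    omega
  obtain ⟨f, g, hfmem, hgmem, hfg⟩ := (Set.one_lt_ncard_iff hSfin.diff).1 hdS
  obtain ⟨hfS, hfe⟩ := hfmem
  obtain ⟨hgS, hge⟩ := hgmem
  rw [Set.mem_singleton_iff] at hfe hge
  obtain ⟨x, y, hfeq, hx1, hy2, hcf, hfH⟩ := key f hfS hfe
  obtain ⟨x', y', hgeq, hx1', hy2', hcg, hgH⟩ := key g hgS hge
  have hfG : f ∈ G.edgeSet := hfS.1
  have hgG : g ∈ G.edgeSet := hgS.1
  -- vertices reachable from u₁ are not reachable from u₂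
  have hside : ∀ z : V, H'.Reachable u₁ z → ¬ H'.Reachable u₂ z := by
    intro z h1 h2
    exact hnr' (h1.trans h2.symm)
  -- the new graph: delete e, add f and g, flip colors on the u₂-side
  set H₂ : SimpleGraph V := H' ⊔ SimpleGraph.fromEdgeSet {f, g} with hH₂
  have hle : H₂ ≤ G := sup_le ((SimpleGraph.deleteEdges_le _).trans hHG)
    (fromEdgeSet_le_of_subset (by intro z hz; rcases hz with rfl | rfl; exacts [hfG, hgG]))
  have hcol : H₂.Colorable 2 := by
    refine ⟨SimpleGraph.Coloring.mk
      (fun v => if H'.Reachable u₂ v then C v + 1 else C v) ?_⟩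
    intro a b hab
    beta_reduce
    rcases hab with hab | hab
    · have hCab : C a ≠ C b := C.valid ((SimpleGraph.deleteEdges_adj.1 hab).1)
      have hr : H'.Reachable u₂ a ↔ H'.Reachable u₂ b :=
        ⟨fun h => h.trans hab.reachable, fun h => h.trans hab.symm.reachable⟩
      by_cases h : H'.Reachable u₂ a
      · rw [if_pos h, if_pos (hr.1 h)]
        exact fun hc => hCab (hinj _ _ hc)
      · rw [if_neg h, if_neg (fun hc => h (hr.2 hc))]
        exact hCab
    · rw [SimpleGraph.fromEdgeSet_adj] at hab
      obtain ⟨hab1, -⟩ := hab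
      rw [Set.mem_insert_iff, Set.mem_singleton_iff] at hab1
      rcases hab1 with hab1 | hab1 <;>
        [rw [hfeq, Sym2.eq_iff] at hab1; rw [hgeq, Sym2.eq_iff] at hab1]
      · rcases hab1 with ⟨rfl, rfl⟩ | ⟨rfl, rfl⟩
        · rw [if_neg (hside _ hx1), if_pos hy2, hcf]
          exact hflip _
        · rw [if_pos hy2, if_neg (hside _ hx1), hcf]
          exact (hflip _).symm
      · rcases hab1 with ⟨rfl, rfl⟩ | ⟨rfl, rfl⟩
        · rw [if_neg (hside _ hx1'), if_pos hy2', hcg]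
          exact hflip _
        · rw [if_pos hy2', if_neg (hside _ hx1'), hcg]
          exact (hflip _).symm
  have hE : H₂.edgeSet = (H.edgeSet \ {e}) ∪ {f, g} := by
    rw [hH₂, SimpleGraph.edgeSet_sup, SimpleGraph.edgeSet_fromEdgeSet, hH'_def,
      SimpleGraph.edgeSet_deleteEdges]
    congr 1
    ext z
    simp only [Set.mem_diff, Set.mem_insert_iff, Set.mem_singleton_iff, Set.mem_setOf_eq,
      and_iff_left_iff_imp]
    rintro (rfl | rfl)
    exacts [G.not_isDiag_of_mem_edgeSet hfG, G.not_isDiag_of_mem_edgeSet hgG]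
  have hdisj : Disjoint (H.edgeSet \ {e}) ({f, g} : Set (Sym2 V)) := by
    rw [Set.disjoint_right]
    rintro z (rfl | rfl) ⟨hz1, -⟩
    exacts [hfH hz1, hgH hz1]
  have hcard : (H.edgeSet.ncard - 1) + 2 ≤ H₂.edgeSet.ncard := by
    rw [hE, Set.ncard_union_eq hdisj hHfin.diff ((Set.finite_singleton _).insert _),
      Set.ncard_pair hfg]
    have := Set.pred_ncard_le_ncard_diff_singleton H.edgeSet e
    omega
  have := hmax H₂ hle hcol
  omega
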